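/- For the horospherical surface σ₀(te^{iθ} + iy) with fixed y and θ ∈ (-π/4, π/4), the projective limit as t → +∞ of [σ₀(te^{iθ}+iy)] in RP³ is the point [1,0,1,0]; for θ ∈ (π/4, 3π/4) it is [0,1,0,1]; for θ ∈ (3π/4, 5π/4) it is [-1,0,1,0]; and for θ ∈ (5π/4, 7π/4) it is [0,-1,0,1]. -/

import Mathlib

open Real Filter Set

lemma cosh_le_exp_abs (x : ℝ) : Real.cosh x ≤ Real.exp |x| := by
  rw [Real.cosh_eq]
  have h1 : Real.exp x ≤ Real.exp |x| := Real.exp_le_exp.2 (le_abs_self x)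
  have h2 : Real.exp (-x) ≤ Real.exp |x| := Real.exp_le_exp.2 (neg_le_abs x)
  linarith

lemma exp_le_two_cosh (x : ℝ) : Real.exp x ≤ 2 * Real.cosh x := by
  rw [Real.cosh_eq]; have := (Real.exp_pos (-x)).le; linarith

lemma abs_sinh_le_cosh (x : ℝ) : |Real.sinh x| ≤ Real.cosh x := by
  rw [Real.abs_sinh, ← Real.cosh_abs]
  exact (Real.sinh_lt_cosh _).le

lemma cosh_ratio (a b : ℝ → ℝ) (h : Tendsto (fun t => |a t| - |b t|) atTop atTop) :
    Tendsto (fun t => Real.cosh (b t) / Real.cosh (a t)) atTop (nhds 0) := by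
  have hbd : Tendsto (fun t => 2 * Real.exp (|b t| - |a t|)) atTop (nhds 0) := by
    have h2 : Tendsto (fun t => |b t| - |a t|) atTop atBot := by
      have := tendsto_neg_atBot_iff.mpr h
      simpa [neg_sub] using this
    simpa using ((Real.tendsto_exp_atBot.comp h2).const_mul 2)
  apply squeeze_zero (fun t => div_nonneg (Real.cosh_pos _).le (Real.cosh_pos _).le) _ hbd
  intro t
  have h1 : Real.cosh (b t) ≤ Real.exp |b t| := cosh_le_exp_abs _
  have h2 : Real.exp |a t| ≤ 2 * Real.cosh (a t) := by
    rw [← Real.cosh_abs]; exact exp_le_two_cosh _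
  have hc : (0:ℝ) < Real.cosh (a t) := Real.cosh_pos _
  have he : (0:ℝ) < Real.exp |a t| := Real.exp_pos _
  rw [div_le_iff₀ hc, Real.exp_sub]
  calc Real.cosh (b t) ≤ Real.exp |b t| := h1
    _ = Real.exp |b t| / Real.exp |a t| * Real.exp |a t| := by field_simp
    _ ≤ Real.exp |b t| / Real.exp |a t| * (2 * Real.cosh (a t)) := by
        exact mul_le_mul_of_nonneg_left h2 (by positivity)
    _ = 2 * (Real.exp |b t| / Real.exp |a t|) * Real.cosh (a t) := by ring

lemma sinh_ratio (a b : ℝ → ℝ) (h : Tendsto (fun t => |a t| - |b t|) atTop atTop) :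
    Tendsto (fun t => Real.sinh (b t) / Real.cosh (a t)) atTop (nhds 0) := by
  apply squeeze_zero_norm _ (cosh_ratio a b h)
  intro t
  rw [Real.norm_eq_abs, abs_div, abs_of_pos (Real.cosh_pos _)]
  gcongr
  exact abs_sinh_le_cosh _

lemma tanh_lim (a : ℝ → ℝ) (h : Tendsto a atTop atTop) :
    Tendsto (fun t => Real.sinh (a t) / Real.cosh (a t)) atTop (nhds 1) := by
  have key : ∀ x : ℝ, Real.sinh x / Real.cosh x
      = (1 - Real.exp (-(2*x))) / (1 + Real.exp (-(2*x))) := by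
    intro x
    rw [Real.sinh_eq, Real.cosh_eq]
    have h1 : Real.exp x ≠ 0 := (Real.exp_pos x).ne'
    have h2 : (0:ℝ) < Real.exp x + Real.exp (-x) := by positivity
    have h3 : (0:ℝ) < 1 + Real.exp (-(2*x)) := by positivity
    rw [div_eq_div_iff (by positivity) (by positivity)]
    have e1 : Real.exp (-x) = (Real.exp x)⁻¹ := by rw [Real.exp_neg]
    have e2 : Real.exp (-(2*x)) = ((Real.exp x)*(Real.exp x))⁻¹ := by
      rw [Real.exp_neg, two_mul, Real.exp_add]
    rw [e1, e2]
    field_simp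
    try tauto
  simp only [key]
  have he : Tendsto (fun t => Real.exp (-(2 * a t))) atTop (nhds 0) := by
    apply Real.tendsto_exp_atBot.comp
    apply tendsto_neg_atBot_iff.mpr
    exact h.const_mul_atTop two_pos
  have := (Tendsto.div ((tendsto_const_nhds (x := (1:ℝ))).sub he)
    ((tendsto_const_nhds (x := (1:ℝ))).add he) (by norm_num))
  convert this using 2 <;> norm_num

lemma tanh_lim_neg (a : ℝ → ℝ) (h : Tendsto (fun t => -a t) atTop atTop) :
    Tendsto (fun t => Real.sinh (a t) / Real.cosh (a t)) atTop (nhds (-1)) := by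
  have := tanh_lim (fun t => -a t) h
  simp only [Real.sinh_neg, Real.cosh_neg, neg_div] at this
  simpa using this.neg

lemma dom (p q s r : ℝ) (h : |s| < |p|) :
    Tendsto (fun t => |2*(t*p+q)| - |2*(t*s+r)|) atTop atTop := by
  have hlin : Tendsto (fun t : ℝ => 2*(|p|-|s|)*t - (2*|q|+2*|r|)) atTop atTop := by
    apply tendsto_atTop_add_const_right
    exact tendsto_id.const_mul_atTop (by linarith)
  apply tendsto_atTop_mono' atTop _ hlin
  filter_upwards [eventually_ge_atTop (0:ℝ)] with t ht
  have h1 : |2*(t*s+r)| ≤ 2*(t*|s| + |r|) := by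
    have : |t*s+r| ≤ t*|s| + |r| := by
      calc |t*s+r| ≤ |t*s| + |r| := abs_add_le _ _
        _ = t*|s| + |r| := by rw [abs_mul, abs_of_nonneg ht]
    calc |2*(t*s+r)| = 2*|t*s+r| := by rw [abs_mul]; norm_num
      _ ≤ 2*(t*|s| + |r|) := by linarith
  have h2 : 2*(t*|p| - |q|) ≤ |2*(t*p+q)| := by
    have : t*|p| - |q| ≤ |t*p+q| := by
      have := abs_sub_abs_le_abs_sub (t*p) (-q)
      simp only [sub_neg_eq_add, abs_neg] at this
      calc t*|p| - |q| = |t*p| - |q| := by rw [abs_mul, abs_of_nonneg ht]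
        _ ≤ |t*p+q| := this
    calc 2*(t*|p| - |q|) ≤ 2*|t*p+q| := by linarith
      _ = |2*(t*p+q)| := by rw [abs_mul]; norm_num
  linarith

lemma angle_key {θ : ℝ} (h : θ ∈ Set.Ioo (-(π/4)) (π/4)) : |Real.sin θ| < Real.cos θ := by
  have hπ := Real.pi_pos
  have habs : |θ| < π/4 := abs_lt.2 ⟨by linarith [h.1], h.2⟩
  have h1 : Real.cos (π/4) < Real.cos |θ| :=
    Real.cos_lt_cos_of_nonneg_of_le_pi (abs_nonneg θ) (by linarith) habs
  have h2 : Real.sin |θ| < Real.sin (π/4) :=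
    Real.sin_lt_sin_of_lt_of_le_pi_div_two (by linarith [abs_nonneg θ]) (by linarith) habs
  have h3 : |Real.sin θ| = Real.sin |θ| := by
    rcases le_or_gt 0 θ with h0 | h0
    · rw [abs_of_nonneg h0,
        abs_of_nonneg (Real.sin_nonneg_of_nonneg_of_le_pi h0 (by linarith [h.2]))]
    · rw [abs_of_neg h0, Real.sin_neg,
        abs_of_nonpos (le_of_lt (Real.sin_neg_of_neg_of_neg_pi_lt h0 (by linarith [h.1])))]
  rw [← Real.cos_abs, h3]
  rw [Real.sin_pi_div_four, ← Real.cos_pi_div_four] at h2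
  linarith

lemma key_smul (A : ℝ → ℝ) (X : ℝ) (t : ℝ) :
    Real.sqrt 2 / Real.cosh (A t) * ((1 / Real.sqrt 2) * X) = X / Real.cosh (A t) := by
  have h2 : Real.sqrt 2 ≠ 0 := by positivity
  have hc : Real.cosh (A t) ≠ 0 := (Real.cosh_pos _).ne'
  field_simp

lemma master1 (A B : ℝ → ℝ) (ε : ℝ)
    (hAB : Tendsto (fun t => |A t| - |B t|) atTop atTop)
    (hε : Tendsto (fun t => Real.sinh (A t) / Real.cosh (A t)) atTop (nhds ε)) :
    Tendsto (fun t => (Real.sqrt 2 / Real.cosh (A t)) •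
      ![(1 / Real.sqrt 2) * Real.sinh (A t), (1 / Real.sqrt 2) * Real.sinh (B t),
        (1 / Real.sqrt 2) * Real.cosh (A t), (1 / Real.sqrt 2) * Real.cosh (B t)])
      atTop (nhds ![ε, 0, 1, 0]) := by
  refine tendsto_pi_nhds.mpr fun i => ?_
  fin_cases i <;>
    simp only [Fin.isValue, Pi.smul_apply, smul_eq_mul, Matrix.cons_val', Matrix.cons_val_zero,
      Matrix.cons_val_one, Matrix.head_cons, Matrix.empty_val', Matrix.cons_val_fin_one,
      Matrix.head_fin_const, Matrix.cons_val_two, Matrix.tail_cons, Matrix.cons_val_three,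
      Matrix.cons_val_four, Fin.mk_zero, Fin.mk_one, key_smul, show ((⟨2,by norm_num⟩ : Fin 4)) = (2:Fin 4) from rfl, show ((⟨3,by norm_num⟩ : Fin 4)) = (3:Fin 4) from rfl, show ((⟨0,by norm_num⟩ : Fin 4)) = (0:Fin 4) from rfl, show ((⟨1,by norm_num⟩ : Fin 4)) = (1:Fin 4) from rfl]
  · exact hε
  · exact sinh_ratio A B hAB
  · simpa only [div_self (Real.cosh_pos _).ne'] using tendsto_const_nhds
  · exact cosh_ratio A B hAB

lemma master2 (A B : ℝ → ℝ) (ε : ℝ)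
    (hAB : Tendsto (fun t => |B t| - |A t|) atTop atTop)
    (hε : Tendsto (fun t => Real.sinh (B t) / Real.cosh (B t)) atTop (nhds ε)) :
    Tendsto (fun t => (Real.sqrt 2 / Real.cosh (B t)) •
      ![(1 / Real.sqrt 2) * Real.sinh (A t), (1 / Real.sqrt 2) * Real.sinh (B t),
        (1 / Real.sqrt 2) * Real.cosh (A t), (1 / Real.sqrt 2) * Real.cosh (B t)])
      atTop (nhds ![0, ε, 0, 1]) := by
  refine tendsto_pi_nhds.mpr fun i => ?_
  fin_cases i <;>
    simp only [Fin.isValue, Pi.smul_apply, smul_eq_mul, Matrix.cons_val', Matrix.cons_val_zero,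
      Matrix.cons_val_one, Matrix.head_cons, Matrix.empty_val', Matrix.cons_val_fin_one,
      Matrix.head_fin_const, Matrix.cons_val_two, Matrix.tail_cons, Matrix.cons_val_three,
      Matrix.cons_val_four, Fin.mk_zero, Fin.mk_one, key_smul, show ((⟨2,by norm_num⟩ : Fin 4)) = (2:Fin 4) from rfl, show ((⟨3,by norm_num⟩ : Fin 4)) = (3:Fin 4) from rfl, show ((⟨0,by norm_num⟩ : Fin 4)) = (0:Fin 4) from rfl, show ((⟨1,by norm_num⟩ : Fin 4)) = (1:Fin 4) from rfl]
  · exact sinh_ratio B A hAB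
  · exact hε
  · exact cosh_ratio B A hAB
  · simpa only [div_self (Real.cosh_pos _).ne'] using tendsto_const_nhds

lemma angle_key2 {θ : ℝ} (h : θ ∈ Set.Ioo (π/4) (3*π/4)) : |Real.cos θ| < Real.sin θ := by
  have h1 : θ - π/2 ∈ Set.Ioo (-(π/4)) (π/4) := ⟨by linarith [h.1], by linarith [h.2]⟩
  have := angle_key h1
  have e1 : Real.sin θ = Real.cos (θ - π/2) := by
    rw [← Real.sin_add_pi_div_two]; ring_nf
  have e2 : Real.cos θ = -Real.sin (θ - π/2) := by
    rw [← Real.cos_add_pi_div_two]; ring_nf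
  rw [e1, e2, abs_neg]; exact this

lemma angle_key3 {θ : ℝ} (h : θ ∈ Set.Ioo (3*π/4) (5*π/4)) : |Real.sin θ| < -Real.cos θ := by
  have h1 : θ - π ∈ Set.Ioo (-(π/4)) (π/4) := ⟨by linarith [h.1], by linarith [h.2]⟩
  have := angle_key h1
  have e1 : Real.sin θ = -Real.sin (θ - π) := by
    rw [← Real.sin_add_pi]; ring_nf
  have e2 : Real.cos θ = -Real.cos (θ - π) := by
    rw [← Real.cos_add_pi]; ring_nf
  rw [e1, e2, abs_neg, neg_neg]; exact this

lemma angle_key4 {θ : ℝ} (h : θ ∈ Set.Ioo (5*π/4) (7*π/4)) : |Real.cos θ| < -Real.sin θ := by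
  have h1 : θ - 3*π/2 ∈ Set.Ioo (-(π/4)) (π/4) := ⟨by linarith [h.1], by linarith [h.2]⟩
  have key := angle_key h1
  obtain ⟨φ, hφ⟩ : ∃ φ, θ - 3*π/2 = φ := ⟨_, rfl⟩
  rw [hφ] at key
  have hθ : θ = (φ + π/2) + π := by linarith [hφ.symm.le]
  have hθ' : θ = φ + 3*π/2 := by linarith [hφ.symm.le]
  rw [hθ, Real.sin_add_pi, Real.cos_add_pi, Real.sin_add_pi_div_two,
    Real.cos_add_pi_div_two]
  simpa using key
theorem stmt16 (y θ : ℝ) :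
    let σ : ℝ → ℝ → (Fin 4 → ℝ) := fun a b =>
      ![(1 / Real.sqrt 2) * Real.sinh (2 * a),
        (1 / Real.sqrt 2) * Real.sinh (2 * b),
        (1 / Real.sqrt 2) * Real.cosh (2 * a),
        (1 / Real.sqrt 2) * Real.cosh (2 * b)]
    -- σ₀(te^{iθ} + iy) has Re = t cos θ, Im = t sin θ + y
    (θ ∈ Ioo (-(π / 4)) (π / 4) → ∃ c : ℝ → ℝ,
      Tendsto (fun t => c t • σ (t * Real.cos θ) (t * Real.sin θ + y)) atTop
        (nhds ![1, 0, 1, 0])) ∧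
    (θ ∈ Ioo (π / 4) (3 * π / 4) → ∃ c : ℝ → ℝ,
      Tendsto (fun t => c t • σ (t * Real.cos θ) (t * Real.sin θ + y)) atTop
        (nhds ![0, 1, 0, 1])) ∧
    (θ ∈ Ioo (3 * π / 4) (5 * π / 4) → ∃ c : ℝ → ℝ,
      Tendsto (fun t => c t • σ (t * Real.cos θ) (t * Real.sin θ + y)) atTop
        (nhds ![-1, 0, 1, 0])) ∧
    (θ ∈ Ioo (5 * π / 4) (7 * π / 4) → ∃ c : ℝ → ℝ,
      Tendsto (fun t => c t • σ (t * Real.cos θ) (t * Real.sin θ + y)) atTop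
        (nhds ![0, -1, 0, 1])) := by
  intro σ
  refine ⟨fun hθ => ?_, fun hθ => ?_, fun hθ => ?_, fun hθ => ?_⟩
  · -- θ ∈ (-π/4, π/4)
    have hd := angle_key hθ
    have hc : 0 < Real.cos θ := (abs_nonneg _).trans_lt hd
    refine ⟨fun t => Real.sqrt 2 / Real.cosh (2 * (t * Real.cos θ)), ?_⟩
    have hAB : Tendsto (fun t => |2 * (t * Real.cos θ)| - |2 * (t * Real.sin θ + y)|)
        atTop atTop := by
      have := dom (Real.cos θ) 0 (Real.sin θ) y (hd.trans_le (le_abs_self _))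
      simpa using this
    have htanh : Tendsto (fun t => Real.sinh (2 * (t * Real.cos θ)) /
        Real.cosh (2 * (t * Real.cos θ))) atTop (nhds 1) :=
      tanh_lim _ ((tendsto_id.atTop_mul_const hc).const_mul_atTop two_pos)
    exact master1 (fun t => 2 * (t * Real.cos θ)) (fun t => 2 * (t * Real.sin θ + y)) 1
      hAB htanh
  · -- θ ∈ (π/4, 3π/4)
    have hd := angle_key2 hθ
    have hs : 0 < Real.sin θ := (abs_nonneg _).trans_lt hd
    refine ⟨fun t => Real.sqrt 2 / Real.cosh (2 * (t * Real.sin θ + y)), ?_⟩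
    have hAB : Tendsto (fun t => |2 * (t * Real.sin θ + y)| - |2 * (t * Real.cos θ)|)
        atTop atTop := by
      have := dom (Real.sin θ) y (Real.cos θ) 0 (hd.trans_le (le_abs_self _))
      simpa using this
    have htanh : Tendsto (fun t => Real.sinh (2 * (t * Real.sin θ + y)) /
        Real.cosh (2 * (t * Real.sin θ + y))) atTop (nhds 1) :=
      tanh_lim _ ((tendsto_atTop_add_const_right _ y
        (tendsto_id.atTop_mul_const hs)).const_mul_atTop two_pos)
    exact master2 (fun t => 2 * (t * Real.cos θ)) (fun t => 2 * (t * Real.sin θ + y)) 1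
      hAB htanh
  · -- θ ∈ (3π/4, 5π/4)
    have hd := angle_key3 hθ
    have hc : 0 < -Real.cos θ := (abs_nonneg _).trans_lt hd
    refine ⟨fun t => Real.sqrt 2 / Real.cosh (2 * (t * Real.cos θ)), ?_⟩
    have hAB : Tendsto (fun t => |2 * (t * Real.cos θ)| - |2 * (t * Real.sin θ + y)|)
        atTop atTop := by
      have := dom (Real.cos θ) 0 (Real.sin θ) y (hd.trans_le (neg_le_abs _))
      simpa using this
    have hA : Tendsto (fun t => -(2 * (t * Real.cos θ))) atTop atTop := by
      have h := (tendsto_id.atTop_mul_const hc).const_mul_atTop two_pos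
      have e : (fun t : ℝ => -(2 * (t * Real.cos θ))) = fun t => 2 * (id t * -Real.cos θ) := by
        funext t; simp only [id]; ring
      rw [e]; exact h
    have htanh : Tendsto (fun t => Real.sinh (2 * (t * Real.cos θ)) /
        Real.cosh (2 * (t * Real.cos θ))) atTop (nhds (-1)) := tanh_lim_neg _ hA
    exact master1 (fun t => 2 * (t * Real.cos θ)) (fun t => 2 * (t * Real.sin θ + y)) (-1)
      hAB htanh
  · -- θ ∈ (5π/4, 7π/4)
    have hd := angle_key4 hθ
    have hs : 0 < -Real.sin θ := (abs_nonneg _).trans_lt hd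
    refine ⟨fun t => Real.sqrt 2 / Real.cosh (2 * (t * Real.sin θ + y)), ?_⟩
    have hAB : Tendsto (fun t => |2 * (t * Real.sin θ + y)| - |2 * (t * Real.cos θ)|)
        atTop atTop := by
      have := dom (Real.sin θ) y (Real.cos θ) 0 (hd.trans_le (neg_le_abs _))
      simpa using this
    have hB : Tendsto (fun t => -(2 * (t * Real.sin θ + y))) atTop atTop := by
      have h := ((tendsto_atTop_add_const_right _ (-y)
        (tendsto_id.atTop_mul_const hs)).const_mul_atTop two_pos)
      have e : (fun t : ℝ => -(2 * (t * Real.sin θ + y)))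
          = fun t => 2 * (id t * -Real.sin θ + -y) := by
        funext t; simp only [id]; ring
      rw [e]; exact h
    have htanh : Tendsto (fun t => Real.sinh (2 * (t * Real.sin θ + y)) /
        Real.cosh (2 * (t * Real.sin θ + y))) atTop (nhds (-1)) := tanh_lim_neg _ hB
    exact master2 (fun t => 2 * (t * Real.cos θ)) (fun t => 2 * (t * Real.sin θ + y)) (-1)
      hAB htanh
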